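/- Fix an integer n ≥ 1, an index i ∈ {0,1,…,n}, an integer N ≥ 1, integers l_1,…,l_N ≥ 1, a nonnegative integer s_0, and elements b_j ∈ B_{l_j} for 1 ≤ j ≤ N. Define recursively, for 1 ≤ j ≤ N, b'_j = ẽ_i^{max(ε_i(b_j) − s_{j−1}, 0)} b_j and s_j = φ_i(b_j) + max(s_{j−1} − ε_i(b_j), 0). Then b'_1 ⊗ ⋯ ⊗ b'_N = ẽ_i^{max(ε_i(b_1 ⊗ ⋯ ⊗ b_N) − s_0, 0)} (b_1 ⊗ ⋯ ⊗ b_N), where the operator on the right is the tensor product operator ẽ_i on B_{l_1} ⊗ ⋯ ⊗ B_{l_N}. -/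

import Mathlib

/-- Iterated application of a partial map: `OptIter g m a` is `g^m a`. -/
def OptIter {α : Type} (g : α → Option α) : ℕ → α → Option α
  | 0, a => some a
  | m + 1, a => (g a).bind (OptIter g m)

/-- Apply the partial maps `g 1`, `g 2`, ..., `g m` in this order. -/
def ChainOpt {α : Type} (g : ℕ → α → Option α) (m : ℕ) (a : α) : Option α :=
  (List.range m).foldl (fun acc j => acc.bind (g (j + 1))) (some a)

/-- A set with partial Kashiwara-type operators indexed by `{0, 1, ..., n}`. -/
structure PreCrystal (n : ℕ) where
  carrier : Type
  e : Fin (n + 1) → carrier → Option carrier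
  f : Fin (n + 1) → carrier → Option carrier

namespace PreCrystal

variable {n : ℕ}

/-- `ε_i(b) = max {m ≥ 0 : ẽ_i^m b is defined}`. -/
noncomputable def eps (C : PreCrystal n) (i : Fin (n + 1)) (b : C.carrier) : ℕ :=
  sSup {m | OptIter (C.e i) m b ≠ none}

/-- `φ_i(b) = max {m ≥ 0 : f̃_i^m b is defined}`. -/
noncomputable def phi (C : PreCrystal n) (i : Fin (n + 1)) (b : C.carrier) : ℕ :=
  sSup {m | OptIter (C.f i) m b ≠ none}

/-- `ẽ_i^max b = ẽ_i^{ε_i(b)} b`. -/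
noncomputable def eMax (C : PreCrystal n) (i : Fin (n + 1)) (b : C.carrier) : Option C.carrier :=
  OptIter (C.e i) (C.eps i b) b

/-- The Weyl group operator `S_i`: `f̃_i^{φ_i(b)-ε_i(b)} b` if `φ_i(b) ≥ ε_i(b)`,
and `ẽ_i^{ε_i(b)-φ_i(b)} b` if `φ_i(b) ≤ ε_i(b)`. -/
noncomputable def S (C : PreCrystal n) (i : Fin (n + 1)) (b : C.carrier) : Option C.carrier :=
  if C.eps i b ≤ C.phi i b then OptIter (C.f i) (C.phi i b - C.eps i b) b
  else OptIter (C.e i) (C.eps i b - C.phi i b) b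

/-- The tensor product `C ⊗ D` of two crystals, with the Kashiwara tensor product rule. -/
noncomputable def tensor (C D : PreCrystal n) : PreCrystal n where
  carrier := C.carrier × D.carrier
  e := fun i p =>
    if D.eps i p.2 ≤ C.phi i p.1 then (C.e i p.1).map (fun b => (b, p.2))
    else (D.e i p.2).map (fun b => (p.1, b))
  f := fun i p =>
    if D.eps i p.2 < C.phi i p.1 then (C.f i p.1).map (fun b => (b, p.2))
    else (D.f i p.2).map (fun b => (p.1, b))

end PreCrystal

/-- Kashiwara raising operator `ẽ_i` of type `A_n^{(1)}` on `(n+1)`-tuples of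
nonnegative integers (zero-indexed: coordinate `j` is `x_{j+1}`): defined iff the
coordinate at index `i` is positive, it adds 1 at index `i-1` (cyclically) and
subtracts 1 at index `i`. -/
def eA (n : ℕ) (i : Fin (n + 1)) (x : Fin (n + 1) → ℕ) : Option (Fin (n + 1) → ℕ) :=
  if 0 < x i then
    some (Function.update (Function.update x (i - 1) (x (i - 1) + 1)) i (x i - 1))
  else none

/-- Kashiwara lowering operator `f̃_i` of type `A_n^{(1)}`: defined iff the coordinate
at index `i-1` is positive, it subtracts 1 at index `i-1` and adds 1 at index `i`. -/
def fA (n : ℕ) (i : Fin (n + 1)) (x : Fin (n + 1) → ℕ) : Option (Fin (n + 1) → ℕ) :=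
  if 0 < x (i - 1) then
    some (Function.update (Function.update x i (x i + 1)) (i - 1) (x (i - 1) - 1))
  else none

/-- The crystal operators of type `A_n^{(1)}` on all `(n+1)`-tuples; the crystal `B_l`
is the subset of tuples with coordinate sum `l`. -/
def BA (n : ℕ) : PreCrystal n where
  carrier := Fin (n + 1) → ℕ
  e := eA n
  f := fA n

/-- The unique element of `{0, ..., n}` congruent to `-k` modulo `n+1`. -/
def negIdx (n : ℕ) (k : ℤ) : Fin (n + 1) :=
  ⟨((-k) % ((n : ℤ) + 1)).toNat, by
    have h1 := Int.emod_nonneg (-k) (by omega : ((n : ℤ) + 1) ≠ 0)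
    have h2 := Int.emod_lt_of_pos (-k) (by omega : (0 : ℤ) < (n : ℤ) + 1)
    omega⟩

/-- The cyclic shift `σ : (x_1, ..., x_{n+1}) ↦ (x_2, ..., x_{n+1}, x_1)`. -/
def shiftA (n : ℕ) (x : Fin (n + 1) → ℕ) : Fin (n + 1) → ℕ := fun j => x (j + 1)

/-- The map `t(x_1, ..., x_{n+1}) = (x_n, x_{n-1}, ..., x_1)`. -/
def tA (n : ℕ) (x : Fin (n + 1) → ℕ) : Fin n → ℕ :=
  fun k => x ⟨n - 1 - (k : ℕ), by omega⟩

/-- The `(N+1)`-fold tensor power `B ⊗ ... ⊗ B`, associated to the left. -/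
noncomputable def BPow (n : ℕ) : ℕ → PreCrystal n
  | 0 => BA n
  | N + 1 => (BPow n N).tensor (BA n)

/-- The element `b_1 ⊗ ... ⊗ b_{N+1}` of the `(N+1)`-fold tensor power. -/
noncomputable def tensorOf (n : ℕ) : (N : ℕ) → (Fin (N + 1) → (Fin (n + 1) → ℕ)) → (BPow n N).carrier
  | 0, b => b 0
  | N + 1, b => (tensorOf n N (fun j => b j.castSucc), b (Fin.last (N + 1)))

/-- Membership in `B_{l_1} ⊗ ... ⊗ B_{l_{N+1}}`: each factor has coordinate sum `l_j`. -/
def memBPow (n : ℕ) : (N : ℕ) → (Fin (N + 1) → ℕ) → (BPow n N).carrier → Prop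
  | 0, l, x => ∑ j, x j = l 0
  | N + 1, l, p => memBPow n N (fun j => l j.castSucc) p.1 ∧ ∑ j, p.2 j = l (Fin.last (N + 1))

/-- The componentwise cyclic shift `σ_B = σ ⊗ ... ⊗ σ` on a tensor power. -/
noncomputable def shiftPow (n : ℕ) : (N : ℕ) → (BPow n N).carrier → (BPow n N).carrier
  | 0, x => shiftA n x
  | N + 1, p => (shiftPow n N p.1, shiftA n p.2)

section OptIterLemmas
variable {α : Type}

lemma optIter_succ (g : α → Option α) (m : ℕ) (a : α) :
    OptIter g (m + 1) a = (g a).bind (OptIter g m) := rfl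

lemma optIter_one (g : α → Option α) (a : α) : OptIter g 1 a = g a := by
  cases h : g a <;> simp [OptIter, h]

lemma optIter_some (g : α → Option α) {m : ℕ} {a b : α} (h : g a = some b) :
    OptIter g (m + 1) a = OptIter g m b := by simp [OptIter, h]

end OptIterLemmas

namespace PreCrystal

variable {n : ℕ}

lemma eps_eq (C : PreCrystal n) (i : Fin (n + 1)) (b : C.carrier) (E : ℕ)
    (h : ∀ m, OptIter (C.e i) m b ≠ none ↔ m ≤ E) : C.eps i b = E := by
  have hs : {m | OptIter (C.e i) m b ≠ none} = Set.Iic E := Set.ext h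
  rw [eps, hs, csSup_Iic]

lemma phi_eq (C : PreCrystal n) (i : Fin (n + 1)) (b : C.carrier) (E : ℕ)
    (h : ∀ m, OptIter (C.f i) m b ≠ none ↔ m ≤ E) : C.phi i b = E := by
  have hs : {m | OptIter (C.f i) m b ≠ none} = Set.Iic E := Set.ext h
  rw [phi, hs, csSup_Iic]

/-- Regularity of a subset: `eps`/`phi` really count maximal defined powers, and
they change by one under the operators. -/
structure Reg (C : PreCrystal n) (i : Fin (n + 1)) (S : Set C.carrier) : Prop where
  he : ∀ b ∈ S, ∀ m : ℕ, (OptIter (C.e i) m b ≠ none ↔ m ≤ C.eps i b)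
  hf : ∀ b ∈ S, ∀ m : ℕ, (OptIter (C.f i) m b ≠ none ↔ m ≤ C.phi i b)
  ce : ∀ b ∈ S, ∀ b', C.e i b = some b' →
    b' ∈ S ∧ C.eps i b' + 1 = C.eps i b ∧ C.phi i b' = C.phi i b + 1
  cf : ∀ b ∈ S, ∀ b', C.f i b = some b' →
    b' ∈ S ∧ C.phi i b' + 1 = C.phi i b ∧ C.eps i b' = C.eps i b + 1

lemma Reg.e_none {C : PreCrystal n} {i : Fin (n + 1)} {S : Set C.carrier}
    (h : Reg C i S) {b : C.carrier} (hb : b ∈ S) (h0 : C.eps i b = 0) :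
    C.e i b = none := by
  have := (h.he b hb 1).not
  rw [optIter_one] at this
  rw [h0] at this; simp only [not_not, Nat.not_succ_le_zero, iff_false, not_not, not_le] at this
  exact this.mpr (by omega)

lemma Reg.e_some {C : PreCrystal n} {i : Fin (n + 1)} {S : Set C.carrier}
    (h : Reg C i S) {b : C.carrier} (hb : b ∈ S) (h0 : 1 ≤ C.eps i b) :
    ∃ b', C.e i b = some b' := by
  have := (h.he b hb 1).mpr h0
  rw [optIter_one] at this
  exact Option.ne_none_iff_exists'.mp this

lemma Reg.f_none {C : PreCrystal n} {i : Fin (n + 1)} {S : Set C.carrier}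
    (h : Reg C i S) {b : C.carrier} (hb : b ∈ S) (h0 : C.phi i b = 0) :
    C.f i b = none := by
  have := (h.hf b hb 1).not
  rw [optIter_one] at this
  rw [h0] at this; simp only [not_not, Nat.not_succ_le_zero, iff_false, not_not, not_le] at this
  exact this.mpr (by omega)

lemma Reg.f_some {C : PreCrystal n} {i : Fin (n + 1)} {S : Set C.carrier}
    (h : Reg C i S) {b : C.carrier} (hb : b ∈ S) (h0 : 1 ≤ C.phi i b) :
    ∃ b', C.f i b = some b' := by
  have := (h.hf b hb 1).mpr h0
  rw [optIter_one] at this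
  exact Option.ne_none_iff_exists'.mp this

end PreCrystal
section BALemmas

variable {n : ℕ} {i : Fin (n + 1)}

lemma sub_one_ne (hn : 1 ≤ n) (i : Fin (n + 1)) : (i - 1 : Fin (n + 1)) ≠ i := by
  intro h
  have h1 : (1 : Fin (n + 1)) = 0 := sub_eq_self.mp h
  have h2 := Fin.one_eq_zero_iff.mp h1
  omega

lemma eA_pos {x : Fin (n + 1) → ℕ} (hi : (i - 1 : Fin (n + 1)) ≠ i) (hx : 0 < x i) :
    ∃ y, eA n i x = some y ∧ y i = x i - 1 ∧ y (i - 1) = x (i - 1) + 1 := by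
  refine ⟨_, by rw [eA, if_pos hx], ?_, ?_⟩
  · simp [Function.update]
  · simp [Function.update, hi]

lemma eA_char (hi : (i - 1 : Fin (n + 1)) ≠ i) :
    ∀ (m : ℕ) (x : Fin (n + 1) → ℕ), OptIter (eA n i) m x ≠ none ↔ m ≤ x i := by
  intro m
  induction m with
  | zero => intro x; simp [OptIter]
  | succ m ih =>
    intro x
    by_cases hx : 0 < x i
    · obtain ⟨y, hy, hyi, _⟩ := eA_pos hi hx
      rw [optIter_some _ hy, ih y, hyi]
      omega
    · have : eA n i x = none := by rw [eA, if_neg hx]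
      rw [optIter_succ, this]
      simp
      omega

lemma fA_pos {x : Fin (n + 1) → ℕ} (hi : (i - 1 : Fin (n + 1)) ≠ i) (hx : 0 < x (i - 1)) :
    ∃ y, fA n i x = some y ∧ y (i - 1) = x (i - 1) - 1 ∧ y i = x i + 1 := by
  refine ⟨_, by rw [fA, if_pos hx], ?_, ?_⟩
  · simp [Function.update]
  · simp [Function.update, hi.symm]

lemma fA_char (hi : (i - 1 : Fin (n + 1)) ≠ i) :
    ∀ (m : ℕ) (x : Fin (n + 1) → ℕ), OptIter (fA n i) m x ≠ none ↔ m ≤ x (i - 1) := by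
  intro m
  induction m with
  | zero => intro x; simp [OptIter]
  | succ m ih =>
    intro x
    by_cases hx : 0 < x (i - 1)
    · obtain ⟨y, hy, hyi, _⟩ := fA_pos hi hx
      rw [optIter_some _ hy, ih y, hyi]
      omega
    · have : fA n i x = none := by rw [fA, if_neg hx]
      rw [optIter_succ, this]
      simp
      omega

lemma BA_eps (hn : 1 ≤ n) (x : Fin (n + 1) → ℕ) : (BA n).eps i x = x i :=
  PreCrystal.eps_eq _ _ _ _ (fun m => eA_char (sub_one_ne hn i) m x)

lemma BA_phi (hn : 1 ≤ n) (x : Fin (n + 1) → ℕ) : (BA n).phi i x = x (i - 1) :=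
  PreCrystal.phi_eq _ _ _ _ (fun m => fA_char (sub_one_ne hn i) m x)

lemma BA_reg (hn : 1 ≤ n) (i : Fin (n + 1)) : PreCrystal.Reg (BA n) i Set.univ := by
  have hi := sub_one_ne hn i
  constructor
  · intro b _ m; erw [BA_eps hn]; exact eA_char hi m b
  · intro b _ m; erw [BA_phi hn]; exact fA_char hi m b
  · intro b _ b' hb'
    have hx : 0 < b i := by
      by_contra hx
      rw [show (BA n).e i b = eA n i b from rfl, eA.eq_1 n i b, if_neg hx] at hb'
      cases hb'
    obtain ⟨y, hy, h1, h2⟩ := eA_pos hi hx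
    have : b' = y := by
      rw [show (BA n).e i b = eA n i b from rfl, hy] at hb'
      exact (Option.some_inj.mp hb').symm
    subst this
    have hE : ∀ x : (BA n).carrier, (BA n).eps i x = x i := BA_eps hn
    have hP : ∀ x : (BA n).carrier, (BA n).phi i x = x (i - 1) := BA_phi hn
    refine ⟨trivial, ?_, ?_⟩ <;> simp only [hE, hP] <;> omega
  · intro b _ b' hb'
    have hx : 0 < b (i - 1) := by
      by_contra hx
      rw [show (BA n).f i b = fA n i b from rfl, fA.eq_1 n i b, if_neg hx] at hb'
      cases hb'
    obtain ⟨y, hy, h1, h2⟩ := fA_pos hi hx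
    have : b' = y := by
      rw [show (BA n).f i b = fA n i b from rfl, hy] at hb'
      exact (Option.some_inj.mp hb').symm
    subst this
    have hE : ∀ x : (BA n).carrier, (BA n).eps i x = x i := BA_eps hn
    have hP : ∀ x : (BA n).carrier, (BA n).phi i x = x (i - 1) := BA_phi hn
    refine ⟨trivial, ?_, ?_⟩ <;> simp only [hE, hP] <;> omega

end BALemmas
namespace PreCrystal

variable {n : ℕ} {C D : PreCrystal n} {i : Fin (n + 1)} {S : Set C.carrier} {T : Set D.carrier}

lemma tensor_e_def (p : (C.tensor D).carrier) :
    (C.tensor D).e i p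
      = if D.eps i p.2 ≤ C.phi i p.1 then (C.e i p.1).map (fun b => (b, p.2))
        else (D.e i p.2).map (fun b => (p.1, b)) := rfl

lemma tensor_f_def (p : (C.tensor D).carrier) :
    (C.tensor D).f i p
      = if D.eps i p.2 < C.phi i p.1 then (C.f i p.1).map (fun b => (b, p.2))
        else (D.f i p.2).map (fun b => (p.1, b)) := rfl

lemma tensor_optIter_e (hS : Reg C i S) (hT : Reg D i T) :
    ∀ (m : ℕ) (p1 : C.carrier) (p2 : D.carrier), p1 ∈ S → p2 ∈ T →
      OptIter ((C.tensor D).e i) m (p1, p2)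
        = (OptIter (C.e i) (m - (D.eps i p2 - C.phi i p1)) p1).bind
            (fun q1 => (OptIter (D.e i) (min m (D.eps i p2 - C.phi i p1)) p2).map
              (fun q2 => (q1, q2))) := by
  intro m
  induction m with
  | zero => intro p1 p2 _ _; simp [OptIter]; rfl
  | succ m ih =>
    intro p1 p2 h1 h2
    erw [optIter_succ, tensor_e_def]
    by_cases hc : D.eps i p2 ≤ C.phi i p1
    · rw [if_pos hc]
      have hd : D.eps i p2 - C.phi i p1 = 0 := by omega
      by_cases he1 : 1 ≤ C.eps i p1
      · obtain ⟨q1, hq1⟩ := hS.e_some h1 he1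
        obtain ⟨hq1S, hq1e, hq1p⟩ := hS.ce p1 h1 q1 hq1
        have hd' : D.eps i p2 - C.phi i q1 = 0 := by omega
        erw [hq1, Option.map_some, Option.bind_some, ih q1 p2 hq1S h2, hd, hd']
        simp only [Nat.sub_zero, Nat.min_zero]
        rw [optIter_some (C.e i) hq1]
      · have h0 : C.eps i p1 = 0 := by omega
        erw [hS.e_none h1 h0, Option.map_none, Option.bind_none, hd]
        have : OptIter (C.e i) (m + 1 - 0) p1 = none := by
          by_contra hne
          have := (hS.he p1 h1 (m + 1 - 0)).mp hne
          omega
        rw [this, Option.bind_none]; rfl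
    · rw [if_neg hc]
      have he2 : 1 ≤ D.eps i p2 := by omega
      obtain ⟨q2, hq2⟩ := hT.e_some h2 he2
      obtain ⟨hq2T, hq2e, hq2p⟩ := hT.ce p2 h2 q2 hq2
      erw [hq2, Option.map_some, Option.bind_some, ih p1 q2 h1 hq2T]
      have e1 : m - (D.eps i q2 - C.phi i p1) = m + 1 - (D.eps i p2 - C.phi i p1) := by omega
      have e2 : min (m + 1) (D.eps i p2 - C.phi i p1)
          = min m (D.eps i q2 - C.phi i p1) + 1 := by omega
      rw [e1, e2, optIter_some (D.e i) hq2]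

lemma tensor_optIter_f (hS : Reg C i S) (hT : Reg D i T) :
    ∀ (m : ℕ) (p1 : C.carrier) (p2 : D.carrier), p1 ∈ S → p2 ∈ T →
      OptIter ((C.tensor D).f i) m (p1, p2)
        = (OptIter (D.f i) (m - (C.phi i p1 - D.eps i p2)) p2).bind
            (fun q2 => (OptIter (C.f i) (min m (C.phi i p1 - D.eps i p2)) p1).map
              (fun q1 => (q1, q2))) := by
  intro m
  induction m with
  | zero => intro p1 p2 _ _; simp [OptIter]; rfl
  | succ m ih =>
    intro p1 p2 h1 h2
    erw [optIter_succ, tensor_f_def]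
    by_cases hc : D.eps i p2 < C.phi i p1
    · rw [if_pos hc]
      have hp1 : 1 ≤ C.phi i p1 := by omega
      obtain ⟨q1, hq1⟩ := hS.f_some h1 hp1
      obtain ⟨hq1S, hq1p, hq1e⟩ := hS.cf p1 h1 q1 hq1
      erw [hq1, Option.map_some, Option.bind_some, ih q1 p2 hq1S h2]
      have e1 : m - (C.phi i q1 - D.eps i p2) = m + 1 - (C.phi i p1 - D.eps i p2) := by omega
      have e2 : min (m + 1) (C.phi i p1 - D.eps i p2)
          = min m (C.phi i q1 - D.eps i p2) + 1 := by omega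
      rw [e1, e2, optIter_some (C.f i) hq1]
    · rw [if_neg hc]
      have hd : C.phi i p1 - D.eps i p2 = 0 := by omega
      by_cases hf2 : 1 ≤ D.phi i p2
      · obtain ⟨q2, hq2⟩ := hT.f_some h2 hf2
        obtain ⟨hq2T, hq2p, hq2e⟩ := hT.cf p2 h2 q2 hq2
        have hd' : C.phi i p1 - D.eps i q2 = 0 := by omega
        erw [hq2, Option.map_some, Option.bind_some, ih p1 q2 h1 hq2T, hd, hd']
        simp only [Nat.sub_zero, Nat.min_zero]
        rw [optIter_some (D.f i) hq2]
      · have h0 : D.phi i p2 = 0 := by omega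
        erw [hT.f_none h2 h0, Option.map_none, Option.bind_none, hd]
        have : OptIter (D.f i) (m + 1 - 0) p2 = none := by
          by_contra hne
          have := (hT.hf p2 h2 (m + 1 - 0)).mp hne
          omega
        rw [this, Option.bind_none]; rfl

lemma tensor_e_char (hS : Reg C i S) (hT : Reg D i T)
    {p1 : C.carrier} {p2 : D.carrier} (h1 : p1 ∈ S) (h2 : p2 ∈ T) (m : ℕ) :
    OptIter ((C.tensor D).e i) m (p1, p2) ≠ none
      ↔ m ≤ C.eps i p1 + (D.eps i p2 - C.phi i p1) := by
  rw [tensor_optIter_e hS hT m p1 p2 h1 h2]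
  have hmin : min m (D.eps i p2 - C.phi i p1) ≤ D.eps i p2 := by omega
  have h2' : OptIter (D.e i) (min m (D.eps i p2 - C.phi i p1)) p2 ≠ none :=
    (hT.he p2 h2 _).mpr hmin
  obtain ⟨q2, hq2⟩ := Option.ne_none_iff_exists'.mp h2'
  constructor
  · intro hne
    have h1' : OptIter (C.e i) (m - (D.eps i p2 - C.phi i p1)) p1 ≠ none := by
      intro hno
      rw [hno, Option.bind_none] at hne
      exact hne rfl
    have := (hS.he p1 h1 _).mp h1'
    omega
  · intro hle
    have h1' : OptIter (C.e i) (m - (D.eps i p2 - C.phi i p1)) p1 ≠ none :=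
      (hS.he p1 h1 _).mpr (by omega)
    obtain ⟨q1, hq1⟩ := Option.ne_none_iff_exists'.mp h1'
    rw [hq1, Option.bind_some, hq2, Option.map_some]
    exact Option.some_ne_none _

lemma tensor_f_char (hS : Reg C i S) (hT : Reg D i T)
    {p1 : C.carrier} {p2 : D.carrier} (h1 : p1 ∈ S) (h2 : p2 ∈ T) (m : ℕ) :
    OptIter ((C.tensor D).f i) m (p1, p2) ≠ none
      ↔ m ≤ D.phi i p2 + (C.phi i p1 - D.eps i p2) := by
  rw [tensor_optIter_f hS hT m p1 p2 h1 h2]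
  have hmin : min m (C.phi i p1 - D.eps i p2) ≤ C.phi i p1 := by omega
  have h1' : OptIter (C.f i) (min m (C.phi i p1 - D.eps i p2)) p1 ≠ none :=
    (hS.hf p1 h1 _).mpr hmin
  obtain ⟨q1, hq1⟩ := Option.ne_none_iff_exists'.mp h1'
  constructor
  · intro hne
    have h2' : OptIter (D.f i) (m - (C.phi i p1 - D.eps i p2)) p2 ≠ none := by
      intro hno
      rw [hno, Option.bind_none] at hne
      exact hne rfl
    have := (hT.hf p2 h2 _).mp h2'
    omega
  · intro hle
    have h2' : OptIter (D.f i) (m - (C.phi i p1 - D.eps i p2)) p2 ≠ none :=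
      (hT.hf p2 h2 _).mpr (by omega)
    obtain ⟨q2, hq2⟩ := Option.ne_none_iff_exists'.mp h2'
    rw [hq2, Option.bind_some, hq1, Option.map_some]
    exact Option.some_ne_none _

lemma tensor_eps (hS : Reg C i S) (hT : Reg D i T)
    {p1 : C.carrier} {p2 : D.carrier} (h1 : p1 ∈ S) (h2 : p2 ∈ T) :
    (C.tensor D).eps i (p1, p2) = C.eps i p1 + (D.eps i p2 - C.phi i p1) :=
  eps_eq _ _ _ _ (tensor_e_char hS hT h1 h2)

lemma tensor_phi (hS : Reg C i S) (hT : Reg D i T)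
    {p1 : C.carrier} {p2 : D.carrier} (h1 : p1 ∈ S) (h2 : p2 ∈ T) :
    (C.tensor D).phi i (p1, p2) = D.phi i p2 + (C.phi i p1 - D.eps i p2) :=
  phi_eq _ _ _ _ (tensor_f_char hS hT h1 h2)

lemma reg_tensor (hS : Reg C i S) (hT : Reg D i T) : Reg (C.tensor D) i (S ×ˢ T) := by
  constructor
  · rintro ⟨p1, p2⟩ ⟨h1, h2⟩ m
    rw [tensor_eps hS hT h1 h2]
    exact tensor_e_char hS hT h1 h2 m
  · rintro ⟨p1, p2⟩ ⟨h1, h2⟩ m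
    rw [tensor_phi hS hT h1 h2]
    exact tensor_f_char hS hT h1 h2 m
  · rintro ⟨p1, p2⟩ ⟨h1, h2⟩ p' hp'
    dsimp only at h1 h2
    erw [tensor_e_def] at hp'
    by_cases hc : D.eps i p2 ≤ C.phi i p1
    · rw [if_pos hc] at hp'
      rcases hq1 : C.e i p1 with _ | q1
      · rw [hq1] at hp'; cases hp'
      rw [hq1, Option.map_some] at hp'
      obtain ⟨hq1S, hq1e, hq1p⟩ := hS.ce p1 h1 q1 hq1
      have hp'' : p' = (q1, p2) := by cases hp'; rfl
      subst hp''
      refine ⟨⟨hq1S, h2⟩, ?_, ?_⟩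
      · rw [tensor_eps hS hT hq1S h2, tensor_eps hS hT h1 h2]; omega
      · rw [tensor_phi hS hT hq1S h2, tensor_phi hS hT h1 h2]; omega
    · rw [if_neg hc] at hp'
      rcases hq2 : D.e i p2 with _ | q2
      · rw [hq2] at hp'; cases hp'
      rw [hq2, Option.map_some] at hp'
      obtain ⟨hq2T, hq2e, hq2p⟩ := hT.ce p2 h2 q2 hq2
      have hp'' : p' = (p1, q2) := by cases hp'; rfl
      subst hp''
      refine ⟨⟨h1, hq2T⟩, ?_, ?_⟩
      · rw [tensor_eps hS hT h1 hq2T, tensor_eps hS hT h1 h2]; omega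
      · rw [tensor_phi hS hT h1 hq2T, tensor_phi hS hT h1 h2]; omega
  · rintro ⟨p1, p2⟩ ⟨h1, h2⟩ p' hp'
    dsimp only at h1 h2
    erw [tensor_f_def] at hp'
    by_cases hc : D.eps i p2 < C.phi i p1
    · rw [if_pos hc] at hp'
      rcases hq1 : C.f i p1 with _ | q1
      · rw [hq1] at hp'; cases hp'
      rw [hq1, Option.map_some] at hp'
      obtain ⟨hq1S, hq1p, hq1e⟩ := hS.cf p1 h1 q1 hq1
      have hp'' : p' = (q1, p2) := by cases hp'; rfl
      subst hp''
      refine ⟨⟨hq1S, h2⟩, ?_, ?_⟩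
      · rw [tensor_phi hS hT hq1S h2, tensor_phi hS hT h1 h2]; omega
      · rw [tensor_eps hS hT hq1S h2, tensor_eps hS hT h1 h2]; omega
    · rw [if_neg hc] at hp'
      rcases hq2 : D.f i p2 with _ | q2
      · rw [hq2] at hp'; cases hp'
      rw [hq2, Option.map_some] at hp'
      obtain ⟨hq2T, hq2p, hq2e⟩ := hT.cf p2 h2 q2 hq2
      have hp'' : p' = (p1, q2) := by cases hp'; rfl
      subst hp''
      refine ⟨⟨h1, hq2T⟩, ?_, ?_⟩
      · rw [tensor_phi hS hT h1 hq2T, tensor_phi hS hT h1 h2]; omega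
      · rw [tensor_eps hS hT h1 hq2T, tensor_eps hS hT h1 h2]; omega

/-- The key exchange lemma for one tensor factor. -/
lemma tensor_exchange (hS : Reg C i S) (hT : Reg D i T)
    {p1 : C.carrier} {p2 : D.carrier} (h1 : p1 ∈ S) (h2 : p2 ∈ T) (s0 : ℕ) :
    OptIter ((C.tensor D).e i) ((C.tensor D).eps i (p1, p2) - s0) (p1, p2)
      = (OptIter (C.e i) (C.eps i p1 - s0) p1).bind
          (fun q1 => (OptIter (D.e i)
              (D.eps i p2 - (C.phi i p1 + (s0 - C.eps i p1))) p2).map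
            (fun q2 => (q1, q2))) := by
  rw [tensor_eps hS hT h1 h2, tensor_optIter_e hS hT _ p1 p2 h1 h2]
  have e1 : C.eps i p1 + (D.eps i p2 - C.phi i p1) - s0 - (D.eps i p2 - C.phi i p1)
      = C.eps i p1 - s0 := by omega
  have e2 : min (C.eps i p1 + (D.eps i p2 - C.phi i p1) - s0) (D.eps i p2 - C.phi i p1)
      = D.eps i p2 - (C.phi i p1 + (s0 - C.eps i p1)) := by omega
  rw [e1, e2]

end PreCrystal
lemma BPow_reg (n : ℕ) (hn : 1 ≤ n) (i : Fin (n + 1)) :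
    ∀ N, PreCrystal.Reg (BPow n N) i Set.univ
  | 0 => BA_reg hn i
  | N + 1 => by
    have h := PreCrystal.reg_tensor (BPow_reg n hn i N) (BA_reg hn i)
    rw [Set.univ_prod_univ] at h
    exact h

lemma s_prefix (n : ℕ) (hn : 1 ≤ n) (i : Fin (n + 1)) :
    ∀ (N' : ℕ) (s : ℕ → ℕ) (b : Fin (N' + 1) → (Fin (n + 1) → ℕ)),
      (∀ j : Fin (N' + 1),
        s ((j : ℕ) + 1) = (BA n).phi i (b j) + (s (j : ℕ) - (BA n).eps i (b j))) →
      s (N' + 1) = (BPow n N').phi i (tensorOf n N' b)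
        + (s 0 - (BPow n N').eps i (tensorOf n N' b)) := by
  intro N'
  induction N' with
  | zero =>
    intro s b hs
    have := hs 0
    exact this
  | succ N' ih =>
    intro s b hs
    have hP := ih s (fun j => b j.castSucc) (fun j => by simpa using hs j.castSucc)
    have hL := hs (Fin.last (N' + 1))
    rw [Fin.val_last] at hL
    have hreg := BPow_reg n hn i N'
    have hregA := BA_reg hn i
    show s (N' + 1 + 1) = _
    rw [hL, hP]
    have he := PreCrystal.tensor_eps hreg hregA
      (Set.mem_univ (tensorOf n N' (fun j => b j.castSucc)))
      (Set.mem_univ (b (Fin.last (N' + 1))))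
    have hp := PreCrystal.tensor_phi hreg hregA
      (Set.mem_univ (tensorOf n N' (fun j => b j.castSucc)))
      (Set.mem_univ (b (Fin.last (N' + 1))))
    show _ = ((BPow n N').tensor (BA n)).phi i
        (tensorOf n N' (fun j => b j.castSucc), b (Fin.last (N' + 1)))
      + (s 0 - ((BPow n N').tensor (BA n)).eps i
        (tensorOf n N' (fun j => b j.castSucc), b (Fin.last (N' + 1))))
    rw [he, hp]
    omega

lemma main_aux (n : ℕ) (hn : 1 ≤ n) (i : Fin (n + 1)) :
    ∀ (N' : ℕ) (s : ℕ → ℕ) (b b' : Fin (N' + 1) → (Fin (n + 1) → ℕ)),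
      (∀ j : Fin (N' + 1),
        OptIter ((BA n).e i) ((BA n).eps i (b j) - s (j : ℕ)) (b j) = some (b' j)) →
      (∀ j : Fin (N' + 1),
        s ((j : ℕ) + 1) = (BA n).phi i (b j) + (s (j : ℕ) - (BA n).eps i (b j))) →
      OptIter ((BPow n N').e i)
        ((BPow n N').eps i (tensorOf n N' b) - s 0) (tensorOf n N' b)
        = some (tensorOf n N' b') := by
  intro N'
  induction N' with
  | zero =>
    intro s b b' hb' _
    have := hb' 0
    exact this
  | succ N' ih =>
    intro s b b' hb' hs
    have hP := ih s (fun j => b j.castSucc) (fun j => b' j.castSucc)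
      (fun j => by simpa using hb' j.castSucc)
      (fun j => by simpa using hs j.castSucc)
    have hreg := BPow_reg n hn i N'
    have hregA := BA_reg hn i
    have hex := PreCrystal.tensor_exchange hreg hregA
      (Set.mem_univ (tensorOf n N' (fun j => b j.castSucc)))
      (Set.mem_univ (b (Fin.last (N' + 1)))) (s 0)
    have hsp := s_prefix n hn i N' s (fun j => b j.castSucc)
      (fun j => by simpa using hs j.castSucc)
    have hL := hb' (Fin.last (N' + 1))
    rw [Fin.val_last, hsp] at hL
    show OptIter (((BPow n N').tensor (BA n)).e i)
        (((BPow n N').tensor (BA n)).eps i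
          (tensorOf n N' (fun j => b j.castSucc), b (Fin.last (N' + 1))) - s 0)
        (tensorOf n N' (fun j => b j.castSucc), b (Fin.last (N' + 1)))
      = some (tensorOf n N' (fun j => b' j.castSucc), b' (Fin.last (N' + 1)))
    rw [hex, hP, Option.bind_some, hL]; rfl
/-- Equation (3.8) (vertex-diagram recursion) for type `A_n^{(1)}`: given
`s_0 ≥ 0` and `b_j ∈ B_{l_j}` (`1 ≤ j ≤ N`, here `N = N'+1`, zero-indexed by
`j : Fin (N'+1)`), define recursively `b'_j = ẽ_i^{(ε_i(b_j) - s_{j-1})_+} b_j` and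
`s_j = φ_i(b_j) + (s_{j-1} - ε_i(b_j))_+`.  Then
`b'_1 ⊗ ⋯ ⊗ b'_N = ẽ_i^{(ε_i(b_1 ⊗ ⋯ ⊗ b_N) - s_0)_+} (b_1 ⊗ ⋯ ⊗ b_N)`
in the tensor product crystal `B_{l_1} ⊗ ⋯ ⊗ B_{l_N}`. -/
theorem stmt16 (n N' : ℕ) (hn : 1 ≤ n) (i : Fin (n + 1))
    (l : Fin (N' + 1) → ℕ) (hl : ∀ j, 1 ≤ l j)
    (s : ℕ → ℕ)
    (b b' : Fin (N' + 1) → (Fin (n + 1) → ℕ))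
    (hb : ∀ j, ∑ m, b j m = l j)
    (hb' : ∀ j : Fin (N' + 1),
      OptIter ((BA n).e i) ((BA n).eps i (b j) - s (j : ℕ)) (b j) = some (b' j))
    (hs : ∀ j : Fin (N' + 1),
      s ((j : ℕ) + 1) = (BA n).phi i (b j) + (s (j : ℕ) - (BA n).eps i (b j))) :
    OptIter ((BPow n N').e i)
      ((BPow n N').eps i (tensorOf n N' b) - s 0) (tensorOf n N' b)
      = some (tensorOf n N' b') := by
  exact main_aux n hn i N' s b b' hb' hs
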